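/- Maximum principle for the Becker-Döring tail density: Let (c_i(t))_{i≥1} be a solution to the Becker-Döring equations with non-negative initial datum, assume the coefficient hypotheses (H1)–(H3), and assume the density of the solution satisfies 0 < ρ < ρ_s. Denote by (G_j(t))_{j≥1} the tail density of the solution. Let ω > 0 and 0 ≤ t₀ < t₁, and assume c_1(t) ≤ ω for all t ∈ [t₀, t₁]. Let (r_j)_{j≥1} be an (ω,ρ)-supersolution to the associated Becker-Döring equations. If G_j(t₀) ≤ r_j for all j ≥ 1, then G_j(t) ≤ r_j for all t ∈ [t₀, t₁] and all j ≥ 1. -/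

import Mathlib

/-!
STATEMENT 7: Maximum principle for the Becker–Döring tail density.

Sequences are indexed by `ℕ`; the physically relevant entries are those of
index `i ≥ 1` (index `0` is unused).  The critical density is handled in
`[0,∞]`.
-/

open Filter Set
open scoped Topology ENNReal

/-- Hypothesis (H1): either `0 < a_i ≤ ā i^γ` for all `i ≥ 1`, some `ā > 0`
and some `0 ≤ γ < 1`, or `C₁ i ≤ a_i ≤ C₂ i` for all `i ≥ 1` and some
`0 < C₁ ≤ C₂`. -/
def BDH1 (a : ℕ → ℝ) (γ : ℝ) : Prop :=
  (0 ≤ γ ∧ γ < 1 ∧ ∃ abar : ℝ, 0 < abar ∧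
      ∀ i : ℕ, 1 ≤ i → a i ≤ abar * (i : ℝ) ^ γ) ∨
  (γ = 1 ∧ ∃ C₁ C₂ : ℝ, 0 < C₁ ∧ C₁ ≤ C₂ ∧
      ∀ i : ℕ, 1 ≤ i → C₁ * (i : ℝ) ≤ a i ∧ a i ≤ C₂ * (i : ℝ))

/-- A solution of the Becker–Döring equations on `[0,∞)` with coagulation
coefficients `a` and fragmentation coefficients `b`. -/
structure IsBDSolution (a b : ℕ → ℝ) (c : ℕ → ℝ → ℝ) : Prop where
  nonneg : ∀ i : ℕ, 1 ≤ i → ∀ t : ℝ, 0 ≤ t → 0 ≤ c i t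
  densSummable : ∀ t : ℝ, 0 ≤ t →
    Summable fun i : ℕ => ((i : ℝ) + 1) * c (i + 1) t
  densConst : ∀ t : ℝ, 0 ≤ t →
    ∑' i : ℕ, ((i : ℝ) + 1) * c (i + 1) t
      = ∑' i : ℕ, ((i : ℝ) + 1) * c (i + 1) 0
  Wsummable : ∀ t : ℝ, 0 ≤ t → Summable fun k : ℕ =>
    a (k + 1) * c 1 t * c (k + 1) t - b (k + 2) * c (k + 2) t
  ode : ∀ i : ℕ, 2 ≤ i → ∀ t : ℝ, 0 ≤ t →
    HasDerivWithinAt (c i)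
      ((a (i - 1) * c 1 t * c (i - 1) t - b i * c i t)
        - (a i * c 1 t * c i t - b (i + 1) * c (i + 1) t)) (Set.Ici 0) t
  ode1 : ∀ t : ℝ, 0 ≤ t →
    HasDerivWithinAt (c 1)
      (-(a 1 * c 1 t * c 1 t - b 2 * c 2 t)
        - ∑' k : ℕ, (a (k + 1) * c 1 t * c (k + 1) t - b (k + 2) * c (k + 2) t))
      (Set.Ici 0) t

/-- The tail density `G_j(t) = ∑_{i ≥ j} c_i(t)`. -/
noncomputable def tailDensity (c : ℕ → ℝ → ℝ) (j : ℕ) (t : ℝ) : ℝ :=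
  ∑' i : ℕ, c (j + i) t

/-- An `(ω,ρ)`-supersolution of the associated Becker–Döring equations: a
non-negative sequence `(r_j)_{j ≥ 1}` with `r_1 ≥ ρ` and
`a_{j-1} ω (r_{j-1} - r_j) + b_j (r_{j+1} - r_j) ≤ 0` for all `j ≥ 2`. -/
def IsSupersolution (a b : ℕ → ℝ) (ω ρ : ℝ) (r : ℕ → ℝ) : Prop :=
  (∀ j : ℕ, 1 ≤ j → 0 ≤ r j) ∧ ρ ≤ r 1 ∧
    ∀ j : ℕ, 2 ≤ j →
      a (j - 1) * ω * (r (j - 1) - r j) + b j * (r (j + 1) - r j) ≤ 0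

set_option maxHeartbeats 4000000 in
/-- **Maximum principle for the Becker–Döring tail density.**  Let `c` be a
solution with non-negative initial datum, assume (H1)–(H3) and
`0 < ρ < ρ_s`.  Let `ω > 0`, `0 ≤ t₀ < t₁`, suppose `c_1(t) ≤ ω` on
`[t₀, t₁]`, and let `(r_j)` be an `(ω,ρ)`-supersolution.  If
`G_j(t₀) ≤ r_j` for all `j ≥ 1`, then `G_j(t) ≤ r_j` for all
`t ∈ [t₀, t₁]` and all `j ≥ 1`. -/
theorem maximum_principle_tail_density
    (a b Q : ℕ → ℝ) (γ zs : ℝ) (c : ℕ → ℝ → ℝ) (ρ : ℝ)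
    (hapos : ∀ i : ℕ, 1 ≤ i → 0 < a i)
    (hbpos : ∀ i : ℕ, 2 ≤ i → 0 < b i)
    (hH1 : BDH1 a γ)
    (hH2 : ∃ bbar : ℝ, 0 < bbar ∧ ∀ i : ℕ, 1 ≤ i → b i ≤ bbar * a i)
    (hQ1 : Q 1 = 1)
    (hQrec : ∀ i : ℕ, 1 ≤ i → Q (i + 1) = a i / b (i + 1) * Q i)
    (hzs : 0 < zs)
    (hH3 : Tendsto (fun i : ℕ => Q (i + 1) / Q i) atTop (𝓝 (1 / zs)))
    (hsol : IsBDSolution a b c)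
    (hρ : ρ = ∑' i : ℕ, ((i : ℝ) + 1) * c (i + 1) 0)
    (hρpos : 0 < ρ)
    (hsub : ENNReal.ofReal ρ
      < ∑' i : ℕ, ENNReal.ofReal (((i : ℝ) + 1) * Q (i + 1) * zs ^ (i + 1)))
    (ω t₀ t₁ : ℝ) (hω : 0 < ω) (ht₀ : 0 ≤ t₀) (ht₀₁ : t₀ < t₁)
    (hc1 : ∀ t ∈ Set.Icc t₀ t₁, c 1 t ≤ ω)
    (r : ℕ → ℝ) (hr : IsSupersolution a b ω ρ r)
    (hinit : ∀ j : ℕ, 1 ≤ j → tailDensity c j t₀ ≤ r j) :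
    ∀ t ∈ Set.Icc t₀ t₁, ∀ j : ℕ, 1 ≤ j → tailDensity c j t ≤ r j := by
  obtain ⟨hrnn, hrρ, hrineq⟩ := hr
  obtain ⟨bbar, hbbar, hbb⟩ := hH2
  have ht01 : t₀ ≤ t₁ := ht₀₁.le
  have hIccsub : Set.Icc t₀ t₁ ⊆ Set.Ici (0:ℝ) := fun s hs => le_trans ht₀ hs.1
  set W : ℕ → ℝ → ℝ := fun k t => a k * c 1 t * c k t - b (k+1) * c (k+1) t with hWdef
  -- constant A with a i ≤ A i
  obtain ⟨A, hA, hAa⟩ : ∃ A : ℝ, 0 < A ∧ ∀ i : ℕ, 1 ≤ i → a i ≤ A * i := by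
    rcases hH1 with ⟨hγ0, hγ1, abar, habar, hab⟩ | ⟨-, C₁, C₂, hC₁, hC₁₂, hab⟩
    · refine ⟨abar, habar, fun i hi => le_trans (hab i hi) ?_⟩
      have h1 : (1:ℝ) ≤ (i:ℝ) := by exact_mod_cast hi
      have h2 : (i:ℝ) ^ γ ≤ (i:ℝ) ^ (1:ℝ) := Real.rpow_le_rpow_of_exponent_le h1 hγ1.le
      rw [Real.rpow_one] at h2
      nlinarith
    · exact ⟨C₂, lt_of_lt_of_le hC₁ hC₁₂, fun i hi => (hab i hi).2⟩
  set M : ℝ := A * ρ * (ω + bbar) with hMdef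
  have hM : 0 < M := by positivity
  -- mass identity
  have hmass : ∀ t : ℝ, 0 ≤ t → ∑' i : ℕ, ((i:ℝ)+1) * c (i+1) t = ρ := by
    intro t ht; rw [hsol.densConst t ht, ← hρ]
  -- summability of c
  have hsumc : ∀ t : ℝ, 0 ≤ t → Summable (fun i : ℕ => c (i+1) t) := by
    intro t ht
    refine Summable.of_nonneg_of_le (fun i => hsol.nonneg (i+1) (by omega) t ht)
      (fun i => ?_) (hsol.densSummable t ht)
    have h0 := hsol.nonneg (i+1) (by omega) t ht
    nlinarith [Nat.cast_nonneg (α := ℝ) i]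
  have hsumshift : ∀ (p : ℕ) (t : ℝ), 0 ≤ t → Summable (fun i : ℕ => c (p+1+i) t) := by
    intro p t ht
    have h1 := (hsumc t ht).comp_injective (add_right_injective p)
    refine h1.congr (fun i => ?_)
    simp only [Function.comp]
    congr 1
    omega
  -- tail splitting
  have hGsplit : ∀ (p : ℕ) (t : ℝ), 0 ≤ t →
      tailDensity c (p+1) t = c (p+1) t + tailDensity c (p+2) t := by
    intro p t ht
    have hs := hsumshift p t ht
    show (∑' i:ℕ, c (p+1+i) t) = c (p+1) t + ∑' i:ℕ, c (p+2+i) t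
    rw [Summable.tsum_eq_zero_add hs]
    congr 1
    exact tsum_congr fun i => by congr 1; omega
  have hGnn : ∀ (p : ℕ) (t : ℝ), 0 ≤ t → 0 ≤ tailDensity c (p+1) t := by
    intro p t ht
    exact tsum_nonneg fun i => hsol.nonneg (p+1+i) (by omega) t ht
  have hGle : ∀ (p : ℕ) (t : ℝ), 0 ≤ t → ((p:ℝ)+1) * tailDensity c (p+1) t ≤ ρ := by
    intro p t ht
    have h1 : ∑' i:ℕ, ((p:ℝ)+1) * c (p+1+i) t ≤ ∑' i:ℕ, ((i:ℝ)+1) * c (i+1) t := by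
      refine Summable.tsum_le_tsum_of_inj (fun i => p + i) (add_right_injective p)
        (fun k _ => mul_nonneg (by positivity) (hsol.nonneg (k+1) (by omega) t ht))
        (fun i => ?_) ((hsumshift p t ht).mul_left _) (hsol.densSummable t ht)
      have e : p+1+i = p+i+1 := by omega
      rw [e]
      refine mul_le_mul_of_nonneg_right ?_ (hsol.nonneg (p+i+1) (by omega) t ht)
      push_cast
      linarith [Nat.cast_nonneg (α := ℝ) i]
    calc ((p:ℝ)+1) * tailDensity c (p+1) t = ∑' i:ℕ, ((p:ℝ)+1) * c (p+1+i) t :=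
          (tsum_mul_left).symm
      _ ≤ ∑' i:ℕ, ((i:ℝ)+1) * c (i+1) t := h1
      _ = ρ := hmass t ht
  -- continuity of c i, W k
  have hccont : ∀ i : ℕ, 1 ≤ i → ContinuousOn (c i) (Set.Ici 0) := by
    intro i hi x hx
    rcases Nat.lt_or_ge i 2 with h | h
    · have : i = 1 := by omega
      subst this
      exact (hsol.ode1 x hx).continuousWithinAt
    · exact (hsol.ode i h x hx).continuousWithinAt
  have hWcont : ∀ k : ℕ, 1 ≤ k → ContinuousOn (W k) (Set.Ici 0) := by
    intro k hk
    exact ((continuousOn_const.mul (hccont 1 le_rfl)).mul (hccont k hk)).sub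
      (continuousOn_const.mul (hccont (k+1) (by omega)))
  -- summable bound on |W|
  have hWabs : ∀ s ∈ Set.Icc t₀ t₁,
      Summable (fun k : ℕ => |W (k+1) s|) ∧ ∑' k : ℕ, |W (k+1) s| ≤ M := by
    intro s hs
    have hs0 : (0:ℝ) ≤ s := hIccsub hs
    have habs : Summable (fun k : ℕ => |W (k+1) s|) := (hsol.Wsummable s hs0).abs
    refine ⟨habs, ?_⟩
    have hg1 : Summable (fun k : ℕ => A * ω * (((k:ℝ)+1) * c (k+1) s)) :=
      (hsol.densSummable s hs0).mul_left _
    have hshift : Summable (fun k : ℕ => ((k:ℝ)+2) * c (k+2) s) := by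
      have h1 := (hsol.densSummable s hs0).comp_injective (add_right_injective 1)
      refine h1.congr (fun k => ?_)
      simp only [Function.comp]
      push_cast
      rw [show 1+k+1 = k+2 from by omega]
      ring
    have hg2 : Summable (fun k : ℕ => bbar * A * (((k:ℝ)+2) * c (k+2) s)) := hshift.mul_left _
    have hbound : ∀ k : ℕ, |W (k+1) s| ≤
        A * ω * (((k:ℝ)+1) * c (k+1) s) + bbar * A * (((k:ℝ)+2) * c (k+2) s) := by
      intro k
      have hc1s := hsol.nonneg 1 le_rfl s hs0
      have hcks := hsol.nonneg (k+1) (by omega) s hs0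
      have hck2 := hsol.nonneg (k+2) (by omega) s hs0
      have hak1 := hAa (k+1) (by omega)
      have hak2 := hAa (k+2) (by omega)
      have hbbk := hbb (k+2) (by omega)
      have hc1ω := hc1 s hs
      have hapk := (hapos (k+1) (by omega)).le
      have hapk2 := (hapos (k+2) (by omega)).le
      have hbk := (hbpos (k+2) (by omega)).le
      push_cast at hak1 hak2
      have hx : a (k+1) * c 1 s * c (k+1) s ≤ A * ω * (((k:ℝ)+1) * c (k+1) s) := by
        have h1 : a (k+1) * c 1 s ≤ (A * ((k:ℝ)+1)) * ω := by nlinarith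
        calc a (k+1) * c 1 s * c (k+1) s ≤ (A * ((k:ℝ)+1) * ω) * c (k+1) s :=
              mul_le_mul_of_nonneg_right h1 hcks
          _ = A * ω * (((k:ℝ)+1) * c (k+1) s) := by ring
      have hy : b (k+2) * c (k+2) s ≤ bbar * A * (((k:ℝ)+2) * c (k+2) s) := by
        have h1 : b (k+2) ≤ bbar * (A * ((k:ℝ)+2)) := by nlinarith
        calc b (k+2) * c (k+2) s ≤ (bbar * (A * ((k:ℝ)+2))) * c (k+2) s :=
              mul_le_mul_of_nonneg_right h1 hck2
          _ = bbar * A * (((k:ℝ)+2) * c (k+2) s) := by ring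
      have h1 : 0 ≤ a (k+1) * c 1 s * c (k+1) s := by positivity
      have h2 : 0 ≤ b (k+2) * c (k+2) s := by positivity
      have habs2 : |W (k+1) s| ≤ a (k+1) * c 1 s * c (k+1) s + b (k+2) * c (k+2) s := by
        show |a (k+1) * c 1 s * c (k+1) s - b (k+1+1) * c (k+1+1) s| ≤ _
        rw [abs_le]
        constructor <;> [linarith; linarith]
      linarith
    have hsum2 : ∑' k : ℕ, ((k:ℝ)+2) * c (k+2) s ≤ ρ := by
      rw [← hmass s hs0]
      refine Summable.tsum_le_tsum_of_inj (fun k => k + 1) (add_left_injective 1)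
        (fun k _ => mul_nonneg (by positivity) (hsol.nonneg (k+1) (by omega) s hs0))
        (fun k => ?_) hshift (hsol.densSummable s hs0)
      push_cast
      exact le_of_eq (by ring_nf)
    have hsum1 : ∑' k : ℕ, ((k:ℝ)+1) * c (k+1) s = ρ := hmass s hs0
    calc ∑' k : ℕ, |W (k+1) s|
        ≤ ∑' k : ℕ, (A * ω * (((k:ℝ)+1) * c (k+1) s) + bbar * A * (((k:ℝ)+2) * c (k+2) s)) :=
          Summable.tsum_le_tsum hbound habs (hg1.add hg2)
      _ = A * ω * (∑' k : ℕ, ((k:ℝ)+1) * c (k+1) s)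
          + bbar * A * (∑' k : ℕ, ((k:ℝ)+2) * c (k+2) s) := by
          rw [Summable.tsum_add hg1 hg2, tsum_mul_left, tsum_mul_left]
      _ ≤ A * ω * ρ + bbar * A * ρ := by
          have h3 : 0 ≤ bbar * A := by positivity
          have h4 : 0 ≤ A * ω := by positivity
          rw [hsum1]
          nlinarith
      _ = M := by rw [hMdef]; ring
  have hWbd : ∀ (k : ℕ), 1 ≤ k → ∀ s ∈ Set.Icc t₀ t₁, |W k s| ≤ M := by
    intro k hk s hs
    obtain ⟨hsum, hle⟩ := hWabs s hs
    obtain ⟨p, rfl⟩ : ∃ p, k = p + 1 := ⟨k-1, by omega⟩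
    exact le_trans (Summable.le_tsum hsum p (fun j _ => abs_nonneg _)) hle
  -- integral identity
  have hIdent : ∀ (q : ℕ) (t' t : ℝ), t₀ ≤ t' → t' ≤ t → t ≤ t₁ →
      tailDensity c (q+2) t - tailDensity c (q+2) t' = ∫ s in t'..t, W (q+1) s := by
    intro q t' t ht₀t' ht't htt₁
    have ht'0 : (0:ℝ) ≤ t' := le_trans ht₀ ht₀t'
    have ht'mem : t' ∈ Set.Icc t₀ t₁ := ⟨ht₀t', le_trans ht't htt₁⟩
    have htmem : t ∈ Set.Icc t₀ t₁ := ⟨le_trans ht₀t' ht't, htt₁⟩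
    have huIcc : Set.uIcc t' t ⊆ Set.Icc t₀ t₁ := by
      rw [Set.uIcc_of_le ht't]; exact Set.Icc_subset_Icc ht₀t' htt₁
    have hIccsub' : Set.Icc t' t ⊆ Set.Ici (0:ℝ) := fun x hx => le_trans ht'0 hx.1
    have hInt : ∀ k : ℕ, 1 ≤ k → IntervalIntegrable (W k) MeasureTheory.volume t' t :=
      fun k hk => ((hWcont k hk).mono (huIcc.trans hIccsub)).intervalIntegrable
    set S : ℕ → ℝ → ℝ := fun N u => ∑ i ∈ Finset.range (N+1), c (q+2+i) u with hSdef
    have hSderiv : ∀ N : ℕ, ∀ x : ℝ, 0 ≤ x →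
        HasDerivWithinAt (S N) (W (q+1) x - W (q+2+N) x) (Set.Ici 0) x := by
      intro N x hx
      have h1 : HasDerivWithinAt (fun u => ∑ i ∈ Finset.range (N+1), c (q+2+i) u)
          (∑ i ∈ Finset.range (N+1), (W (q+1+i) x - W (q+2+i) x)) (Set.Ici 0) x := by
        refine HasDerivWithinAt.fun_sum (fun i _ => ?_)
        have h2 := hsol.ode (q+2+i) (by omega) x hx
        rw [show q+2+i-1 = q+1+i from by omega] at h2
        have e : q+1+i+1 = q+2+i := by omega
        have e2 : W (q+1+i) x - W (q+2+i) x =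
            (a (q+1+i) * c 1 x * c (q+1+i) x - b (q+2+i) * c (q+2+i) x)
            - (a (q+2+i) * c 1 x * c (q+2+i) x - b (q+2+i+1) * c (q+2+i+1) x) := by
          simp only [hWdef]
          rw [e]
        rw [e2]
        exact h2
      have e3 : ∑ i ∈ Finset.range (N+1), (W (q+1+i) x - W (q+2+i) x)
          = W (q+1) x - W (q+2+N) x := by
        have h4 := Finset.sum_range_sub' (fun i => W (q+1+i) x) (N+1)
        calc ∑ i ∈ Finset.range (N+1), (W (q+1+i) x - W (q+2+i) x)
            = ∑ i ∈ Finset.range (N+1), (W (q+1+i) x - W (q+1+(i+1)) x) :=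
              Finset.sum_congr rfl (fun i _ => by rw [show q+1+(i+1) = q+2+i from by omega])
          _ = W (q+1+0) x - W (q+1+(N+1)) x := h4
          _ = W (q+1) x - W (q+2+N) x := by
              rw [show q+1+0 = q+1 from rfl, show q+1+(N+1) = q+2+N from by omega]
      rw [← e3]
      exact h1
    have hFTC : ∀ N : ℕ, (∫ s in t'..t, (W (q+1) s - W (q+2+N) s)) = S N t - S N t' := by
      intro N
      refine intervalIntegral.integral_eq_sub_of_hasDeriv_right_of_le ht't ?_ ?_ ?_
      · refine continuousOn_finset_sum _ (fun i _ => ?_)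
        exact (hccont (q+2+i) (by omega)).mono hIccsub'
      · intro x hx
        have hx0 : (0:ℝ) < x := lt_of_le_of_lt ht'0 hx.1
        exact ((hSderiv N x hx0.le).hasDerivAt (Ici_mem_nhds hx0)).hasDerivWithinAt
      · exact (hInt (q+1) (by omega)).sub (hInt (q+2+N) (by omega))
    have hsplit : ∀ N : ℕ, S N t - S N t'
        = (∫ s in t'..t, W (q+1) s) - ∫ s in t'..t, W (q+2+N) s := by
      intro N
      rw [← hFTC N, intervalIntegral.integral_sub (hInt (q+1) (by omega)) (hInt (q+2+N) (by omega))]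
    have hlim1 : ∀ u ∈ Set.Icc t₀ t₁,
        Tendsto (fun N => S N u) atTop (𝓝 (tailDensity c (q+2) u)) := by
      intro u hu
      have hsum := hsumshift (q+1) u (hIccsub hu)
      have h5 := hsum.hasSum.tendsto_sum_nat
      exact h5.comp (tendsto_add_atTop_nat 1)
    have hlim2 : Tendsto (fun N => ∫ s in t'..t, W (q+2+N) s) atTop (𝓝 0) := by
      set h : ℕ → ℝ := fun N => ∫ s in t'..t, |W (q+2+N) s| with hhdef
      have hInta : ∀ k : ℕ, 1 ≤ k →
          IntervalIntegrable (fun s => |W k s|) MeasureTheory.volume t' t :=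
        fun k hk => (((hWcont k hk).mono (huIcc.trans hIccsub)).abs).intervalIntegrable
      have hhsum : Summable h := by
        refine summable_of_sum_range_le (c := |t - t'| * M) (fun N => ?_) (fun K => ?_)
        · exact intervalIntegral.integral_nonneg ht't (fun s _ => abs_nonneg _)
        · simp only [hhdef]
          rw [← intervalIntegral.integral_finset_sum
            (fun N _ => hInta (q+2+N) (by omega))]
          have hmono : (∫ s in t'..t, ∑ N ∈ Finset.range K, |W (q+2+N) s|)
              ≤ ∫ s in t'..t, M := by
            refine intervalIntegral.integral_mono_on ht't ?_ intervalIntegrable_const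
              (fun s hs => ?_)
            · refine (continuousOn_finset_sum _ (fun N _ => ?_)).intervalIntegrable
              exact ((hWcont (q+2+N) (by omega)).mono (huIcc.trans hIccsub)).abs
            · have hsmem : s ∈ Set.Icc t₀ t₁ := (Set.Icc_subset_Icc ht₀t' htt₁) hs
              obtain ⟨hWs, hWtle⟩ := hWabs s hsmem
              have hre : ∑ N ∈ Finset.range K, |W (q+2+N) s|
                  = ∑ m ∈ Finset.Ico (q+1) (q+1+K), |W (m+1) s| := by
                rw [Finset.sum_Ico_eq_sum_range]
                simp only [Nat.add_sub_cancel_left]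
                exact Finset.sum_congr rfl fun i _ => by
                  rw [show q+1+i+1 = q+2+i from by omega]
              rw [hre]
              exact le_trans (Summable.sum_le_tsum _ (fun m _ => abs_nonneg _) hWs) hWtle
          rw [intervalIntegral.integral_const, smul_eq_mul] at hmono
          calc (∫ s in t'..t, ∑ N ∈ Finset.range K, |W (q+2+N) s|) ≤ (t - t') * M := hmono
            _ ≤ |t - t'| * M := by
                have := le_abs_self (t - t'); nlinarith
      have hterm : Tendsto h atTop (𝓝 0) := hhsum.tendsto_atTop_zero
      refine squeeze_zero_norm (fun N => ?_) hterm
      calc ‖∫ s in t'..t, W (q+2+N) s‖ ≤ ∫ s in t'..t, ‖W (q+2+N) s‖ :=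
            intervalIntegral.norm_integral_le_integral_norm ht't
        _ = h N := by simp only [hhdef, Real.norm_eq_abs]
    have hLHS : Tendsto (fun N => S N t - S N t') atTop
        (𝓝 (tailDensity c (q+2) t - tailDensity c (q+2) t')) :=
      (hlim1 t htmem).sub (hlim1 t' ht'mem)
    have hRHS : Tendsto (fun N => S N t - S N t') atTop
        (𝓝 ((∫ s in t'..t, W (q+1) s) - 0)) := by
      simp only [hsplit]
      exact tendsto_const_nhds.sub hlim2
    have := tendsto_nhds_unique hLHS hRHS
    rw [sub_zero] at this
    exact this
  -- continuity of tails on [t₀,t₁]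
  have hGcont : ∀ q : ℕ, ContinuousOn (tailDensity c (q+2)) (Set.Icc t₀ t₁) := by
    intro q
    have hlip : LipschitzOnWith M.toNNReal (tailDensity c (q+2)) (Set.Icc t₀ t₁) := by
      refine LipschitzOnWith.of_dist_le_mul (fun x hx y hy => ?_)
      rw [Real.dist_eq, Real.dist_eq, Real.coe_toNNReal M hM.le]
      have hkey : ∀ x' y' : ℝ, x' ∈ Set.Icc t₀ t₁ → y' ∈ Set.Icc t₀ t₁ → y' ≤ x' →
          |tailDensity c (q+2) x' - tailDensity c (q+2) y'| ≤ M * |x' - y'| := by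
        intro x' y' hx' hy' hle
        rw [hIdent q y' x' hy'.1 hle hx'.2]
        rw [← Real.norm_eq_abs]
        refine intervalIntegral.norm_integral_le_of_norm_le_const (fun s hs => ?_)
        rw [Set.uIoc_of_le hle] at hs
        have : s ∈ Set.Icc t₀ t₁ := ⟨le_trans hy'.1 hs.1.le, le_trans hs.2 hx'.2⟩
        rw [Real.norm_eq_abs]
        exact hWbd (q+1) (by omega) s this
      rcases le_total y x with h | h
      · exact hkey x y hx hy h
      · rw [abs_sub_comm, abs_sub_comm x y]
        exact hkey y x hy hx h
    exact hlip.continuousOn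
  -- main epsilon claim
  have key : ∀ ε : ℝ, 0 < ε → ∀ t ∈ Set.Icc t₀ t₁, ∀ j : ℕ, 1 ≤ j →
      tailDensity c j t - r j < ε * (1 + (t - t₀)) := by
    intro ε hε
    by_contra hcon
    push_neg at hcon
    obtain ⟨ts, hts, js, hjs1, hjsge⟩ := hcon
    set J : ℕ := ⌈ρ / ε⌉₊ with hJdef
    set v : ℕ → ℝ → ℝ := fun j s => tailDensity c j s - r j - ε * (1 + (s - t₀)) with hvdef
    have hrange : ∀ s ∈ Set.Icc t₀ t₁, ∀ j : ℕ, 1 ≤ j → 0 ≤ v j s → 2 ≤ j ∧ j ≤ J := by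
      intro s hs j hj hv
      have hs0 : (0:ℝ) ≤ s := hIccsub hs
      obtain ⟨p, rfl⟩ : ∃ p, j = p + 1 := ⟨j - 1, by omega⟩
      have hεle : ε ≤ tailDensity c (p+1) s - r (p+1) := by
        have h1 : ε ≤ ε * (1 + (s - t₀)) :=
          le_mul_of_one_le_right hε.le (by linarith [hs.1])
        simp only [hvdef] at hv
        linarith
      have hGles := hGle p s hs0
      have hrj := hrnn (p+1) (by omega)
      have hGnns := hGnn p s hs0
      constructor
      · by_contra hp
        have hp0 : p = 0 := by omega
        subst hp0
        have h2 : tailDensity c 1 s ≤ ρ := by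
          have h := hGles
          norm_num at h
          exact h
        simp only [Nat.zero_add] at hεle hrj
        linarith [hrρ]
      · have hGε : ε ≤ tailDensity c (p+1) s := le_trans hεle (by linarith)
        have h2 : ((p:ℝ)+1) * ε ≤ ρ :=
          le_trans (mul_le_mul_of_nonneg_left hGε (by positivity)) hGles
        have h3 : ((p:ℝ)+1) ≤ ρ / ε := by rw [le_div_iff₀ hε]; linarith
        have h4 : ((p+1:ℕ):ℝ) ≤ (J:ℝ) := by
          push_cast
          exact le_trans h3 (Nat.le_ceil _)
        exact_mod_cast h4
    have hvcont : ∀ j : ℕ, 2 ≤ j → ContinuousOn (v j) (Set.Icc t₀ t₁) := by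
      intro j hj
      obtain ⟨q, rfl⟩ : ∃ q, j = q + 2 := ⟨j - 2, by omega⟩
      refine ((hGcont q).sub continuousOn_const).sub (Continuous.continuousOn ?_)
      exact continuous_const.mul (continuous_const.add ((continuous_id.sub continuous_const)))
    set B : Set ℝ := ⋃ j ∈ Finset.Icc 2 J, (Set.Icc t₀ t₁ ∩ v j ⁻¹' Set.Ici 0) with hBdef
    have hBsub : B ⊆ Set.Icc t₀ t₁ := by
      simp only [hBdef]
      exact Set.iUnion₂_subset fun j _ => Set.inter_subset_left
    have hBclosed : IsClosed B := by
      refine Set.Finite.isClosed_biUnion (Finset.finite_toSet _) (fun j hj => ?_)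
      have hj2 : 2 ≤ j := (Finset.mem_Icc.mp hj).1
      exact (hvcont j hj2).preimage_isClosed_of_isClosed isClosed_Icc isClosed_Ici
    have hBne : B.Nonempty := by
      refine ⟨ts, ?_⟩
      have h0 : 0 ≤ v js ts := by simp only [hvdef]; linarith
      obtain ⟨h2, hJ⟩ := hrange ts hts js hjs1 h0
      simp only [hBdef, Set.mem_iUnion, Set.mem_inter_iff, Set.mem_preimage, Set.mem_Ici]
      exact ⟨js, by simp [Finset.mem_Icc, h2, hJ], hts, h0⟩
    have hBbdd : BddBelow B := ⟨t₀, fun s hs => (hBsub hs).1⟩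
    set T : ℝ := sInf B with hTdef
    have hTB : T ∈ B := hBclosed.csInf_mem hBne hBbdd
    have hTmem : T ∈ Set.Icc t₀ t₁ := hBsub hTB
    have hTlb : ∀ s ∈ B, T ≤ s := fun s hs => csInf_le hBbdd hs
    have hT0 : (0:ℝ) ≤ T := hIccsub hTmem
    obtain ⟨jstar, hjmem, hjv⟩ : ∃ j ∈ Finset.Icc 2 J, 0 ≤ v j T := by
      simp only [hBdef, Set.mem_iUnion, Set.mem_inter_iff, Set.mem_preimage,
        Set.mem_Ici] at hTB
      obtain ⟨j, hj1, _, hj2⟩ := hTB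
      exact ⟨j, hj1, hj2⟩
    have hjstar2 : 2 ≤ jstar := (Finset.mem_Icc.mp hjmem).1
    obtain ⟨q, rfl⟩ : ∃ q, jstar = q + 2 := ⟨jstar - 2, by omega⟩
    have hTne : t₀ < T := by
      rcases eq_or_lt_of_le hTmem.1 with h | h
      · exfalso
        have hin := hinit (q+2) (by omega)
        have : v (q+2) t₀ < 0 := by
          simp only [hvdef]
          have : ε * (1 + (t₀ - t₀)) = ε := by ring
          rw [this]
          linarith
        rw [← h] at hjv
        linarith
      · exact h
    have hbefore : ∀ s, t₀ ≤ s → s < T → ∀ j : ℕ, 1 ≤ j → v j s < 0 := by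
      intro s hs0 hsT j hj
      by_contra hge
      push_neg at hge
      have hsmem : s ∈ Set.Icc t₀ t₁ := ⟨hs0, le_trans hsT.le hTmem.2⟩
      obtain ⟨h2, hJ⟩ := hrange s hsmem j hj hge
      have hsB : s ∈ B := by
        simp only [hBdef, Set.mem_iUnion, Set.mem_inter_iff, Set.mem_preimage, Set.mem_Ici]
        exact ⟨j, by simp [Finset.mem_Icc, h2, hJ], hsmem, hge⟩
      exact absurd (hTlb s hsB) (not_le.mpr hsT)
    have hatT : ∀ j : ℕ, 1 ≤ j → v j T ≤ 0 := by
      intro j hj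
      rcases Nat.lt_or_ge j 2 with h1 | h2
      · have hj1 : j = 1 := by omega
        subst hj1
        have hg := hGle 0 T hT0
        have hg1 : tailDensity c 1 T ≤ ρ := by norm_num at hg; exact hg
        simp only [hvdef]
        have hεm : ε ≤ ε * (1 + (T - t₀)) :=
          le_mul_of_one_le_right hε.le (by linarith [hTmem.1])
        linarith [hrρ]
      · rcases Nat.lt_or_ge J j with hJlt | hJle
        · by_contra hgt
          push_neg at hgt
          obtain ⟨-, hJ2⟩ := hrange T hTmem j hj hgt.le
          omega
        · have hcw : ContinuousWithinAt (v j) (Set.Ico t₀ T) T :=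
            ((hvcont j h2) T hTmem).mono
              (fun x hx => ⟨hx.1, le_trans hx.2.le hTmem.2⟩)
          have hne : (𝓝[Set.Ico t₀ T] T).NeBot := by
            rw [← mem_closure_iff_nhdsWithin_neBot, closure_Ico (ne_of_lt hTne)]
            exact ⟨hTne.le, le_rfl⟩
          refine le_of_tendsto hcw ?_
          filter_upwards [self_mem_nhdsWithin] with s hs
          exact (hbefore s hs.1 hs.2 j hj).le
    have hvT : v (q+2) T = 0 := le_antisymm (hatT (q+2) (by omega)) hjv
    have hKpos : (0:ℝ) < a (q+1) * ω + b (q+2) :=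
      add_pos (mul_pos (hapos (q+1) (by omega)) hω) (hbpos (q+2) (by omega))
    set K : ℝ := a (q+1) * ω + b (q+2) with hKdef
    have hIccT : Set.Icc t₀ T ⊆ Set.Icc t₀ t₁ := Set.Icc_subset_Icc le_rfl hTmem.2
    have hum : ∀ j : ℕ, 1 ≤ j → ∀ s ∈ Set.Icc t₀ T,
        tailDensity c j s - r j ≤ ε * (1 + (s - t₀)) := by
      intro j hj s hs
      rcases eq_or_lt_of_le hs.2 with h | h
      · have := hatT j hj
        simp only [hvdef] at this
        rw [h]
        linarith
      · have := hbefore s hs.1 h j hj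
        simp only [hvdef] at this
        linarith
    have hWptle : ∀ s ∈ Set.Icc t₀ T, W (q+1) s
        ≤ K * (ε * (1 + (s - t₀)) - (tailDensity c (q+2) s - r (q+2))) := by
      intro s hs
      have hsmem : s ∈ Set.Icc t₀ t₁ := hIccT hs
      have hs0 : (0:ℝ) ≤ s := hIccsub hsmem
      have hc1s : 0 ≤ c 1 s := hsol.nonneg 1 le_rfl s hs0
      have hc1ω : c 1 s ≤ ω := hc1 s hsmem
      have hsplit1 : c (q+1) s = tailDensity c (q+1) s - tailDensity c (q+2) s := by
        linarith [hGsplit q s hs0]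
      have hsplit2 : c (q+2) s = tailDensity c (q+2) s - tailDensity c (q+3) s := by
        have := hGsplit (q+1) s hs0
        rw [show q+1+1 = q+2 from rfl, show q+1+2 = q+3 from by omega] at this
        linarith
      have hsuper := hrineq (q+2) (by omega)
      rw [show q+2-1 = q+1 from by omega, show q+2+1 = q+3 from by omega] at hsuper
      have hm1 := hum (q+1) (by omega) s hs
      have hm3 := hum (q+3) (by omega) s hs
      have haq : (0:ℝ) < a (q+1) := hapos (q+1) (by omega)
      have hbq : (0:ℝ) < b (q+2) := hbpos (q+2) (by omega)
      have hcq1 : 0 ≤ c (q+1) s := hsol.nonneg (q+1) (by omega) s hs0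
      have hstep : a (q+1) * c 1 s * c (q+1) s ≤ a (q+1) * ω * c (q+1) s := by
        nlinarith [mul_nonneg (mul_nonneg haq.le (sub_nonneg.mpr hc1ω)) hcq1]
      have hp1 : a (q+1) * ω * (tailDensity c (q+1) s - r (q+1))
          ≤ a (q+1) * ω * (ε * (1 + (s - t₀))) :=
        mul_le_mul_of_nonneg_left hm1 (by positivity)
      have hp2 : b (q+2) * (tailDensity c (q+3) s - r (q+3))
          ≤ b (q+2) * (ε * (1 + (s - t₀))) :=
        mul_le_mul_of_nonneg_left hm3 hbq.le
      show a (q+1) * c 1 s * c (q+1) s - b (q+1+1) * c (q+1+1) s ≤ _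
      rw [show q+1+1 = q+2 from rfl, hKdef, hsplit1, hsplit2]
      rw [hsplit1] at hstep
      linarith [hstep, hsuper, hp1, hp2]
    set t' : ℝ := max t₀ (T - 1/(2*K)) with ht'def
    have ht't₀ : t₀ ≤ t' := le_max_left _ _
    have ht'T : t' < T := by
      apply max_lt hTne
      have : (0:ℝ) < 1/(2*K) := by positivity
      linarith
    set w : ℝ → ℝ := fun s =>
      ε * (1 + (s - t₀)) - (tailDensity c (q+2) s - r (q+2)) with hwdef
    clear_value w
    have hwcont : ContinuousOn w (Set.Icc t' T) := by
      have h1 : ContinuousOn (fun s => -(v (q+2) s)) (Set.Icc t₀ t₁) :=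
        (hvcont (q+2) (by omega)).neg
      refine (h1.mono (Set.Icc_subset_Icc ht't₀ hTmem.2)).congr (fun s _ => ?_)
      simp only [hwdef, hvdef]
      ring
    have hwT : w T = 0 := by
      simp only [hwdef]
      simp only [hvdef] at hvT
      linarith
    have hwpos : ∀ s ∈ Set.Ico t₀ T, 0 < w s := by
      intro s hs
      have := hbefore s hs.1 hs.2 (q+2) (by omega)
      simp only [hvdef] at this
      simp only [hwdef]
      linarith
    have hineq : ∀ s₀ ∈ Set.Icc t' T,
        w s₀ ≤ K * (∫ s in s₀..T, w s) - ε * (T - s₀) := by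
      intro s₀ hs₀
      have hs₀T : s₀ ≤ T := hs₀.2
      have hs₀t₀ : t₀ ≤ s₀ := le_trans ht't₀ hs₀.1
      have hident := hIdent q s₀ T hs₀t₀ hs₀T hTmem.2
      have huI : Set.uIcc s₀ T ⊆ Set.Icc t' T := by
        rw [Set.uIcc_of_le hs₀T]; exact Set.Icc_subset_Icc hs₀.1 le_rfl
      have hintW : IntervalIntegrable (W (q+1)) MeasureTheory.volume s₀ T :=
        ((hWcont (q+1) (by omega)).mono (fun x hx =>
          hIccsub (hIccT ⟨le_trans hs₀t₀ ((Set.uIcc_of_le hs₀T ▸ hx).1),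
            (Set.uIcc_of_le hs₀T ▸ hx).2⟩))).intervalIntegrable
      have hintw : IntervalIntegrable (fun s => K * w s) MeasureTheory.volume s₀ T :=
        (continuousOn_const.mul (hwcont.mono huI)).intervalIntegrable
      have hmono : (∫ s in s₀..T, W (q+1) s) ≤ ∫ s in s₀..T, K * w s := by
        refine intervalIntegral.integral_mono_on hs₀T hintW hintw (fun s hs => ?_)
        have hsmem : s ∈ Set.Icc t₀ T := ⟨le_trans hs₀t₀ hs.1, hs.2⟩
        have := hWptle s hsmem
        simpa only [hwdef] using this
      rw [intervalIntegral.integral_const_mul] at hmono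
      have huT : tailDensity c (q+2) T - r (q+2) = ε * (1 + (T - t₀)) := by
        simp only [hvdef] at hvT
        linarith
      simp only [hwdef]
      have hwint : (∫ s in s₀..T, w s) = ∫ s in s₀..T,
          (ε * (1 + (s - t₀)) - (tailDensity c (q+2) s - r (q+2))) := by
        simp only [hwdef]
      rw [← hwint]
      linarith [hident, hmono]
    obtain ⟨s₀, hs₀mem, hs₀max⟩ := (isCompact_Icc (a := t') (b := T)).exists_isMaxOn
      (Set.nonempty_Icc.mpr ht'T.le) hwcont
    have hmax : ∀ s ∈ Set.Icc t' T, w s ≤ w s₀ := hs₀max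
    have hws₀pos : 0 < w s₀ :=
      lt_of_lt_of_le (hwpos t' ⟨ht't₀, ht'T⟩) (hmax t' (Set.left_mem_Icc.mpr ht'T.le))
    have hintbd : (∫ s in s₀..T, w s) ≤ (T - s₀) * w s₀ := by
      have huI : Set.uIcc s₀ T ⊆ Set.Icc t' T := by
        rw [Set.uIcc_of_le hs₀mem.2]; exact Set.Icc_subset_Icc hs₀mem.1 le_rfl
      have h1 : (∫ s in s₀..T, w s) ≤ ∫ s in s₀..T, w s₀ :=
        intervalIntegral.integral_mono_on hs₀mem.2
          ((hwcont.mono huI).intervalIntegrable) intervalIntegrable_const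
          (fun s hs => hmax s ⟨le_trans hs₀mem.1 hs.1, hs.2⟩)
      rw [intervalIntegral.integral_const, smul_eq_mul] at h1
      exact h1
    have hKT : K * (T - s₀) ≤ 1/2 := by
      have h2 : T - 1/(2*K) ≤ t' := le_max_right _ _
      have h3 : T - s₀ ≤ 1/(2*K) := by linarith [hs₀mem.1]
      calc K * (T - s₀) ≤ K * (1/(2*K)) := mul_le_mul_of_nonneg_left h3 hKpos.le
        _ = 1/2 := by field_simp
    have hfinal := hineq s₀ hs₀mem
    have hKint : K * (∫ s in s₀..T, w s) ≤ K * ((T - s₀) * w s₀) :=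
      mul_le_mul_of_nonneg_left hintbd hKpos.le
    have h3 : K * ((T - s₀) * w s₀) ≤ (1/2) * w s₀ := by
      calc K * ((T - s₀) * w s₀) = (K * (T - s₀)) * w s₀ := by ring
        _ ≤ (1/2) * w s₀ := mul_le_mul_of_nonneg_right hKT hws₀pos.le
    have h4 : 0 ≤ ε * (T - s₀) := mul_nonneg hε.le (by linarith [hs₀mem.2])
    have hKI := le_trans hKint h3
    have hchk : w s₀ ≤ 1/2 * w s₀ - ε * (T - s₀) :=
      le_trans hfinal (sub_le_sub_right hKI _)
    linarith only [hchk, h4, hws₀pos]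
  -- conclusion
  intro t ht j hj
  by_contra hlt
  push_neg at hlt
  have hC : (0:ℝ) < 1 + (t - t₀) := by
    have := ht.1; linarith
  have hδ : 0 < tailDensity c j t - r j := by linarith
  have := key ((tailDensity c j t - r j) / (2 * (1 + (t - t₀)))) (by positivity) t ht j hj
  rw [div_mul_eq_mul_div, mul_comm] at this
  have h2 : (1 + (t - t₀)) * (tailDensity c j t - r j) / (2 * (1 + (t - t₀)))
      = (tailDensity c j t - r j) / 2 := by
    field_simp
  rw [h2] at this; linarith
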